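/- Under a uniformly random single translocation of a permutation of length n, the probability P_k that the entry at position k is displaced equals 1 − ((k−2)² + (n−k−1)²)/(n−1)², and this probability is maximized at k = ⌈n/2⌉. -/

import Mathlib

/-- The set of words of nonidentity translocations on `[n]` (0-indexed):
the identity word with some entry `i` moved to position `j`, excluding the identity. -/
def transWords (n : ℕ) : Finset (List ℕ) :=
  (((Finset.range n) ×ˢ (Finset.range n)).image
      (fun p : ℕ × ℕ => ((List.range n).eraseIdx p.1).insertIdx p.2 p.1)) \
    {List.range n}

private lemma length_erase {n i : ℕ} (hi : i < n) :
    ((List.range n).eraseIdx i).length = n - 1 := by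
  rw [List.length_eraseIdx]; simp [hi]

private def wrd (n : ℕ) (q : ℕ × ℕ) : List ℕ :=
  ((List.range n).eraseIdx q.1).insertIdx q.2 q.1

private lemma length_wrd {n i j : ℕ} (hi : i < n) (hj : j < n) :
    (wrd n (i, j)).length = n := by
  unfold wrd
  rw [List.length_insertIdx_of_le_length (by rw [length_erase hi]; omega), length_erase hi]
  omega

private lemma getElem_wrd0 {n i j p : ℕ} (hi : i < n) (hj : j < n) (hp : p < n)
    (h : p < (((List.range n).eraseIdx i).insertIdx j i).length) :
    (((List.range n).eraseIdx i).insertIdx j i)[p] =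
      if p = j then i
      else if p < j then (if p < i then p else p + 1)
      else (if p ≤ i then p - 1 else p) := by
  have hL : ((List.range n).eraseIdx i).length = n - 1 := length_erase hi
  rcases lt_trichotomy p j with hpj | hpj | hpj
  · rw [List.getElem_insertIdx_of_lt hpj h]
    rw [List.getElem_eraseIdx]
    split_ifs <;> simp only [List.getElem_range] <;> (try split_ifs) <;> omega
  · subst hpj
    rw [List.getElem_insertIdx_self h]
    simp
  · have hrw : p = j + (p - j - 1) + 1 := by omega
    have h2 : j + (p - j - 1) < ((List.range n).eraseIdx i).length := by omega
    rw [List.getElem_insertIdx_of_gt hpj h]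
    rw [List.getElem_eraseIdx]
    split_ifs <;> simp only [List.getElem_range] <;> (try split_ifs) <;> omega

private lemma getElem_wrd {n i j p : ℕ} (hi : i < n) (hj : j < n) (hp : p < n)
    (h : p < (wrd n (i, j)).length) :
    (wrd n (i, j))[p] =
      if p = j then i
      else if p < j then (if p < i then p else p + 1)
      else (if p ≤ i then p - 1 else p) := getElem_wrd0 hi hj hp h

private lemma getD_wrd {n i j p : ℕ} (hi : i < n) (hj : j < n) (hp : p < n) :
    (wrd n (i, j)).getD p 0 =
      if p = j then i
      else if p < j then (if p < i then p else p + 1)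
      else (if p ≤ i then p - 1 else p) := by
  rw [List.getD_eq_getElem _ _ (by rw [length_wrd hi hj]; exact hp)]
  exact getElem_wrd0 hi hj hp _

private lemma getD_at {n i j : ℕ} (hi : i < n) (hj : j < n) :
    (wrd n (i, j)).getD j 0 = i := by
  rw [getD_wrd hi hj hj]; simp

private lemma getD_left {n i j p : ℕ} (hi : i < n) (hj : j < n) (h1 : j < p) (h2 : p ≤ i) :
    (wrd n (i, j)).getD p 0 = p - 1 := by
  rw [getD_wrd hi hj (by omega)]; split_ifs <;> omega

private lemma getD_right {n i j p : ℕ} (hi : i < n) (hj : j < n) (h1 : i ≤ p) (h2 : p < j) :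
    (wrd n (i, j)).getD p 0 = p + 1 := by
  rw [getD_wrd hi hj (by omega)]; split_ifs <;> omega

private lemma displaced_iff {n i j p : ℕ} (hi : i < n) (hj : j < n) (hij : i ≠ j)
    (hp : p < n) :
    (wrd n (i, j)).getD p 0 ≠ p ↔ (min i j ≤ p ∧ p ≤ max i j) := by
  rw [getD_wrd hi hj hp]
  split_ifs <;> omega

private lemma wrd_diag {n i : ℕ} (hi : i < n) : wrd n (i, i) = List.range n := by
  apply List.ext_getElem (by rw [length_wrd hi hi]; simp)
  intro p h1 h2
  have hp : p < n := by rwa [length_wrd hi hi] at h1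
  rw [getElem_wrd hi hi hp, List.getElem_range]
  split_ifs <;> omega

private lemma wrd_swap {n i : ℕ} (hi : i + 1 < n) : wrd n (i, i + 1) = wrd n (i + 1, i) := by
  apply List.ext_getElem (by rw [length_wrd (by omega) hi, length_wrd hi (by omega)])
  intro p h1 h2
  have hp : p < n := by rwa [length_wrd (by omega) hi] at h1
  rw [getElem_wrd (by omega) hi hp, getElem_wrd hi (by omega) hp]
  split_ifs <;> omega

private def Tset (m : ℕ) : Finset (ℕ × ℕ) :=
  (Finset.range m ×ˢ Finset.range m).filter (fun q => q.2 ≠ q.1 ∧ q.2 ≠ q.1 + 1)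

private lemma mem_Tset {m : ℕ} {q : ℕ × ℕ} :
    q ∈ Tset m ↔ q.1 < m ∧ q.2 < m ∧ q.2 ≠ q.1 ∧ q.2 ≠ q.1 + 1 := by
  simp [Tset, Finset.mem_filter, Finset.mem_product, and_assoc]

private lemma card_Tset (m : ℕ) : (Tset m).card = (m - 1) ^ 2 := by
  have hT : Tset m = (Finset.range m).biUnion
      (fun i => ((Finset.range m).filter (fun j => j ≠ i ∧ j ≠ i + 1)).image (fun j => (i, j))) := by
    ext q
    simp only [mem_Tset, Finset.mem_biUnion, Finset.mem_image, Finset.mem_filter,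
      Finset.mem_range]
    constructor
    · rintro ⟨h1, h2, h3, h4⟩
      exact ⟨q.1, h1, q.2, ⟨h2, h3, h4⟩, rfl⟩
    · rintro ⟨i, hi, j, ⟨hj, hj1, hj2⟩, rfl⟩
      exact ⟨hi, hj, hj1, hj2⟩
  rw [hT, Finset.card_biUnion]
  · have hcard : ∀ i ∈ Finset.range m,
        (((Finset.range m).filter (fun j => j ≠ i ∧ j ≠ i + 1)).image (fun j => (i, j))).card
          = if i + 1 < m then m - 2 else m - 1 := by
      intro i hi
      rw [Finset.card_image_of_injOn (fun a _ b _ h => by simpa using h)]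
      have : (Finset.range m).filter (fun j => j ≠ i ∧ j ≠ i + 1)
          = ((Finset.range m).erase i).erase (i + 1) := by
        ext j
        simp only [Finset.mem_filter, Finset.mem_erase, Finset.mem_range]
        tauto
      rw [this]
      rw [Finset.mem_range] at hi
      by_cases h : i + 1 < m
      · rw [if_pos h, Finset.card_erase_of_mem (by simp only [Finset.mem_erase, Finset.mem_range]; omega),
          Finset.card_erase_of_mem (by simp [hi]), Finset.card_range]
        omega
      · rw [if_neg h]
        have : ((Finset.range m).erase i).erase (i + 1) = (Finset.range m).erase i := by
          apply Finset.erase_eq_of_notMem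
          simp only [Finset.mem_erase, Finset.mem_range]
          omega
        rw [this, Finset.card_erase_of_mem (by simp [hi]), Finset.card_range]
    rw [Finset.sum_congr rfl hcard]
    rcases Nat.eq_zero_or_pos m with rfl | hm
    · simp
    · obtain ⟨m', rfl⟩ : ∃ m', m = m' + 1 := ⟨m - 1, by omega⟩
      rw [Finset.sum_range_succ, if_neg (by omega)]
      have : ∀ x ∈ Finset.range m', (if x + 1 < m' + 1 then m' + 1 - 2 else m' + 1 - 1) = m' - 1 := by
        intro x hx
        rw [Finset.mem_range] at hx
        rw [if_pos (by omega)]; omega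
      rw [Finset.sum_congr rfl this, Finset.sum_const, Finset.card_range, smul_eq_mul]
      cases m' <;> simp [Nat.succ_sub_one] <;> ring_nf <;> omega
  · intro x hx y hy hxy
    simp only [Finset.disjoint_left, Finset.mem_image, Finset.mem_filter]
    rintro q ⟨a, _, rfl⟩ ⟨b, _, hb⟩
    exact hxy (by simpa using congrArg Prod.fst hb.symm)

private lemma getD_range {n j : ℕ} (hj : j < n) : (List.range n).getD j 0 = j := by
  rw [List.getD_eq_getElem _ _ (by simpa using hj), List.getElem_range]

private lemma transWords_eq {n : ℕ} (hn : 1 ≤ n) :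
    transWords n = (Tset n).image (wrd n) := by
  ext w
  rw [transWords, Finset.mem_sdiff, Finset.mem_singleton]
  constructor
  · rintro ⟨hmem, hne⟩
    rw [Finset.mem_image] at hmem
    obtain ⟨⟨i, j⟩, hq, rfl⟩ := hmem
    rw [Finset.mem_product, Finset.mem_range, Finset.mem_range] at hq
    obtain ⟨hi, hj⟩ := hq
    change wrd n (i, j) ∈ _
    have hne' : wrd n (i, j) ≠ List.range n := hne
    clear hne
    rename' hne' => hne
    have hij : i ≠ j := by
      rintro rfl
      exact hne (wrd_diag hi)
    rw [Finset.mem_image]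
    by_cases hadj : j = i + 1
    · subst hadj
      refine ⟨(i + 1, i), ?_, (wrd_swap hj).symm⟩
      rw [mem_Tset]
      refine ⟨hj, by omega, by omega, by omega⟩
    · exact ⟨(i, j), by rw [mem_Tset]; exact ⟨hi, hj, Ne.symm hij, hadj⟩, rfl⟩
  · intro hmem
    rw [Finset.mem_image] at hmem
    obtain ⟨⟨i, j⟩, hq, rfl⟩ := hmem
    rw [mem_Tset] at hq
    obtain ⟨hi, hj, hji, _⟩ := hq
    constructor
    · rw [Finset.mem_image]
      exact ⟨(i, j), by rw [Finset.mem_product]; simp [Finset.mem_range, hi, hj], rfl⟩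
    · intro heq
      have h1 := getD_at hi hj
      rw [heq, getD_range hj] at h1
      exact hji h1

private lemma wrd_injOn {n : ℕ} : Set.InjOn (wrd n) (Tset n) := by
  rintro ⟨i, j⟩ h ⟨i', j'⟩ h' heq
  rw [Finset.mem_coe, mem_Tset] at h h'
  obtain ⟨hi, hj, hji, hji1⟩ := h
  obtain ⟨hi', hj', hji', hji1'⟩ := h'
  simp only at *
  have hD : ∀ p, p < n → ((min i j ≤ p ∧ p ≤ max i j) ↔ (min i' j' ≤ p ∧ p ≤ max i' j')) := by
    intro p hp
    rw [← displaced_iff hi hj (Ne.symm hji) hp, ← displaced_iff hi' hj' (Ne.symm hji') hp, heq]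
  have h1 := hD (min i j) (by omega)
  have h2 := hD (min i' j') (by omega)
  have h3 := hD (max i j) (by omega)
  have h4 := hD (max i' j') (by omega)
  have hmin : min i j = min i' j' := by omega
  have hmax : max i j = max i' j' := by omega
  have hvalj : (wrd n (i, j)).getD j 0 = (wrd n (i', j')).getD j 0 := by rw [heq]
  have hvalj' : (wrd n (i, j)).getD j' 0 = (wrd n (i', j')).getD j' 0 := by rw [heq]
  rcases lt_or_gt_of_ne hji with hlt | hgt
  · rcases lt_or_gt_of_ne hji' with hlt' | hgt'
    · -- j < i, j' < i'
      have hjj' : j = j' := by omega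
      rw [getD_at hi hj, hjj', getD_at hi' hj'] at hvalj
      subst hjj'; subst hvalj; rfl
    · -- j < i, i' < j' : i' = j, j' = i
      have hij : i' = j := by omega
      have hji2 : j' = i := by omega
      rw [getD_at hi hj, getD_right hi' hj' (by omega) (by omega)] at hvalj
      omega
  · rcases lt_or_gt_of_ne hji' with hlt' | hgt'
    · -- i < j, j' < i' : i = j', j = i'
      have h5 : i = j' := by omega
      have h6 : j = i' := by omega
      rw [getD_right hi hj (by omega) (by omega), getD_at hi' hj'] at hvalj'
      omega
    · -- i < j, i' < j'
      have h5 : i = i' := by omega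
      have h6 : j = j' := by omega
      subst h5; subst h6; rfl

private lemma low_filter {n p : ℕ} (hp : p ≤ n) :
    (Tset n).filter (fun q => max q.1 q.2 < p) = Tset p := by
  ext ⟨a, b⟩
  simp only [Finset.mem_filter, mem_Tset]
  omega

private lemma high_filter {n p : ℕ} :
    (Tset n).filter (fun q => p < min q.1 q.2)
      = (Tset (n - 1 - p)).image (fun q => (q.1 + (p + 1), q.2 + (p + 1))) := by
  ext ⟨a, b⟩
  simp only [Finset.mem_filter, Finset.mem_image, mem_Tset, Prod.mk.injEq, Prod.exists]
  constructor
  · rintro ⟨⟨ha, hb, h1, h2⟩, h3⟩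
    exact ⟨a - (p + 1), b - (p + 1), ⟨by omega, by omega, by omega, by omega⟩, by omega, by omega⟩
  · rintro ⟨x, y, ⟨hx, hy, h1, h2⟩, hxa, hyb⟩
    refine ⟨⟨by omega, by omega, by omega, by omega⟩, by omega⟩

private lemma key (n p : ℕ) (hn : 3 ≤ n) (hp1 : 1 ≤ p) (hp2 : p ≤ n - 2) :
    ((transWords n).filter (fun w => w.getD p 0 ≠ p)).card
      + ((p - 1) ^ 2 + (n - 2 - p) ^ 2) = (n - 1) ^ 2 := by
  rw [transWords_eq (by omega), Finset.filter_image,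
    Finset.card_image_of_injOn (wrd_injOn.mono (by exact_mod_cast Finset.filter_subset _ _))]
  have hcong : (Tset n).filter (fun q => (wrd n q).getD p 0 ≠ p)
      = (Tset n).filter (fun q => min q.1 q.2 ≤ p ∧ p ≤ max q.1 q.2) := by
    apply Finset.filter_congr
    rintro ⟨i, j⟩ hq
    rw [mem_Tset] at hq
    exact displaced_iff hq.1 hq.2.1 (Ne.symm hq.2.2.1) (by omega)
  rw [hcong]
  have hsum := Finset.card_filter_add_card_filter_not
    (s := Tset n) (fun q => min q.1 q.2 ≤ p ∧ p ≤ max q.1 q.2)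
  have hneg : (Tset n).filter (fun q => ¬(min q.1 q.2 ≤ p ∧ p ≤ max q.1 q.2))
      = Tset p ∪ (Tset (n - 1 - p)).image (fun q => (q.1 + (p + 1), q.2 + (p + 1))) := by
    rw [show ((Tset n).filter (fun q => ¬(min q.1 q.2 ≤ p ∧ p ≤ max q.1 q.2)))
        = (Tset n).filter (fun q => max q.1 q.2 < p ∨ p < min q.1 q.2) from
      Finset.filter_congr (fun q _ => by omega)]
    rw [Finset.filter_or, low_filter (by omega), high_filter]
  have hdisj : Disjoint (Tset p)
      ((Tset (n - 1 - p)).image (fun q => (q.1 + (p + 1), q.2 + (p + 1)))) := by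
    rw [Finset.disjoint_left]
    rintro ⟨a, b⟩ ha hb
    rw [mem_Tset] at ha
    simp only [Finset.mem_image, mem_Tset, Prod.mk.injEq, Prod.exists] at hb
    omega
  have himgcard : ((Tset (n - 1 - p)).image (fun q => (q.1 + (p + 1), q.2 + (p + 1)))).card
      = (n - 2 - p) ^ 2 := by
    rw [Finset.card_image_of_injOn (fun a _ b _ h => by
      simp only [Prod.mk.injEq] at h
      exact Prod.ext (by omega) (by omega)), card_Tset]
    congr 1
    omega
  rw [hneg, Finset.card_union_of_disjoint hdisj, card_Tset, card_Tset, himgcard] at hsum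
  omega

/-- Under a uniformly random nonidentity translocation of a permutation of length `n`,
the probability `P_k` that the entry at position `k` (1-indexed, `2 ≤ k ≤ n−1`) is
displaced equals `1 − ((k−2)² + (n−k−1)²)/(n−1)²`, and this probability is maximized
at the center `k = ⌈n/2⌉`. -/
theorem translocation_displacement_probability (n k : ℕ) (hn : 3 ≤ n)
    (hk : 2 ≤ k) (hk' : k ≤ n - 1) :
    (((transWords n).filter (fun w => w.getD (k - 1) 0 ≠ k - 1)).card : ℚ)
        / ((n : ℚ) - 1) ^ 2
      = 1 - (((k : ℚ) - 2) ^ 2 + ((n : ℚ) - (k : ℚ) - 1) ^ 2) / ((n : ℚ) - 1) ^ 2 ∧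
    ∀ k' : ℕ, 2 ≤ k' → k' ≤ n - 1 →
      1 - (((k' : ℚ) - 2) ^ 2 + ((n : ℚ) - (k' : ℚ) - 1) ^ 2) / ((n : ℚ) - 1) ^ 2 ≤
        1 - (((((n + 1) / 2 : ℕ) : ℚ) - 2) ^ 2 + ((n : ℚ) - (((n + 1) / 2 : ℕ) : ℚ) - 1) ^ 2)
          / ((n : ℚ) - 1) ^ 2 := by
  have hn3 : (3 : ℚ) ≤ (n : ℚ) := by exact_mod_cast hn
  have hpos : (0 : ℚ) < ((n : ℚ) - 1) ^ 2 := by nlinarith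
  constructor
  · have hkey := key n (k - 1) hn (by omega) (by omega)
    rw [show k - 1 - 1 = k - 2 from by omega, show n - 2 - (k - 1) = n - k - 1 from by omega]
      at hkey
    have hQ : (((transWords n).filter (fun w => w.getD (k - 1) 0 ≠ k - 1)).card : ℚ)
        + (((k - 2 : ℕ) : ℚ) ^ 2 + ((n - k - 1 : ℕ) : ℚ) ^ 2) = ((n - 1 : ℕ) : ℚ) ^ 2 := by
      exact_mod_cast congrArg (fun x : ℕ => (x : ℚ)) hkey
    rw [Nat.cast_sub (by omega : 1 ≤ n)] at hQ
    rw [Nat.cast_sub (by omega : 2 ≤ k)] at hQ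
    rw [Nat.cast_sub (by omega : 1 ≤ n - k), Nat.cast_sub (by omega : k ≤ n)] at hQ
    push_cast at hQ
    rw [div_eq_iff (ne_of_gt hpos), sub_mul, one_mul, div_mul_cancel₀ _ (ne_of_gt hpos)]
    linarith [hQ]
  · intro k' hk2 hk2'
    set c : ℕ := (n + 1) / 2 with hc
    have h2c : 2 * c = n ∨ 2 * c = n + 1 := by omega
    have hineq : (((c : ℚ) - 2) ^ 2 + ((n : ℚ) - (c : ℚ) - 1) ^ 2)
        ≤ (((k' : ℚ) - 2) ^ 2 + ((n : ℚ) - (k' : ℚ) - 1) ^ 2) := by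
      rcases h2c with h | h
      · have hnq : (n : ℚ) = 2 * (c : ℚ) := by exact_mod_cast h.symm
        rw [hnq]
        rcases le_or_gt k' c with hle | hlt
        · have : (k' : ℚ) ≤ (c : ℚ) := by exact_mod_cast hle
          nlinarith [mul_nonneg (show (0:ℚ) ≤ (c:ℚ) - k' by linarith)
            (show (0:ℚ) ≤ (c:ℚ) + 1 - k' by linarith)]
        · have : (c : ℚ) + 1 ≤ (k' : ℚ) := by exact_mod_cast hlt
          nlinarith [mul_nonneg (show (0:ℚ) ≤ (k':ℚ) - c by linarith)
            (show (0:ℚ) ≤ (k':ℚ) - c - 1 by linarith)]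
      · have hnq : (n : ℚ) = 2 * (c : ℚ) - 1 := by
          have h2 : ((2 * c : ℕ) : ℚ) = ((n + 1 : ℕ) : ℚ) := by rw [h]
          push_cast at h2
          linarith
        rw [hnq]
        nlinarith [sq_nonneg ((k' : ℚ) - (c : ℚ))]
    gcongr
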